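/- Let P̃, V, U, Q be complex square matrices indexed by Fin M with P̃ = V Λ Uᴴ, where Λ is the diagonal matrix with diagonal entries λ_1, …, λ_M, Uᴴ V = I, λ_1 = 1, the first column of V is the all-ones vector, the first row of Uᴴ is the row vector π, and |λ_m| < 1 for all m ≥ 2. Set μ = π Q 𝟙, α = π Q V, β = Uᴴ Q 𝟙, and γ_l = π Q P̃^{l−1} Q 𝟙 − μ² for l ≥ 1. Then the series Σ_{l=1}^∞ γ_l converges, with sum Σ_{m=2}^{M} α_m β_m / (1 − λ_m). -/

import Mathlib

open Matrix
open scoped BigOperators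

/-- **Closed-form steady-state covariance (Eq. (21)).**
Under the spectral decomposition `Pt = V Λ Uᴴ` with leading eigentriple `(1, 𝟙, π)`
and all other eigenvalues strictly inside the unit disc, the series
`∑_{l=1}^∞ γ_l` with `γ_l = π Q Pt^{l-1} Q 𝟙 − μ²` converges to
`∑_{m=2}^{M} α_m β_m / (1 − λ_m)`. -/
theorem steady_state_covariance_sum
    {M : ℕ} [NeZero M]
    (Pt V U Q : Matrix (Fin M) (Fin M) ℂ) (lam : Fin M → ℂ) (π : Fin M → ℂ)
    (hdecomp : Pt = V * Matrix.diagonal lam * Uᴴ)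
    (hbiorth : Uᴴ * V = 1)
    (hlam1 : lam 0 = 1)
    (hV1 : ∀ i, V i 0 = 1)
    (hU1 : ∀ j, Uᴴ 0 j = π j)
    (hsub : ∀ m : Fin M, m ≠ 0 → ‖lam m‖ < 1)
    (μ : ℂ) (hμ : μ = π ⬝ᵥ Q.mulVec (fun _ => 1))
    (α : Fin M → ℂ) (hα : α = Matrix.vecMul (Matrix.vecMul π Q) V)
    (β : Fin M → ℂ) (hβ : β = Matrix.mulVec (Uᴴ * Q) (fun _ => 1)) :
    HasSum
      (fun l : ℕ => π ⬝ᵥ (Q * Pt ^ l * Q).mulVec (fun _ => 1) - μ ^ 2)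
      (∑ m ∈ Finset.univ.erase (0 : Fin M), α m * β m / (1 - lam m)) := by
  have hVU : V * Uᴴ = 1 := mul_eq_one_comm.mp hbiorth
  -- powers of Pt
  have hpow : ∀ l : ℕ, Pt ^ l = V * Matrix.diagonal (fun m => lam m ^ l) * Uᴴ := by
    intro l
    induction l with
    | zero => simp [hVU]
    | succ l ih =>
        rw [pow_succ, ih, hdecomp]
        have : (V * Matrix.diagonal (fun m => lam m ^ l) * Uᴴ) *
            (V * Matrix.diagonal lam * Uᴴ)
            = V * ((Matrix.diagonal (fun m => lam m ^ l) * (Uᴴ * V)) *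
                Matrix.diagonal lam) * Uᴴ := by
          simp only [Matrix.mul_assoc]
        rw [this, hbiorth, Matrix.mul_one, Matrix.diagonal_mul_diagonal]
        simp [← pow_succ]
  -- the l-th term
  have hterm : ∀ l : ℕ,
      π ⬝ᵥ (Q * Pt ^ l * Q).mulVec (fun _ => 1)
        = ∑ m, α m * lam m ^ l * β m := by
    intro l
    rw [hpow l, Matrix.dotProduct_mulVec]
    have h1 : Matrix.vecMul π (Q * (V * Matrix.diagonal (fun m => lam m ^ l) * Uᴴ) * Q)
        = Matrix.vecMul (Matrix.vecMul (Matrix.vecMul (Matrix.vecMul π Q) V)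
            (Matrix.diagonal (fun m => lam m ^ l))) (Uᴴ * Q) := by
      simp only [← Matrix.vecMul_vecMul, Matrix.mul_assoc]
    rw [h1, ← hα, ← Matrix.dotProduct_mulVec, ← hβ]
    simp only [dotProduct, Matrix.vecMul_diagonal]
  -- μ = α 0 and μ = β 0
  have hα0 : α 0 = μ := by
    rw [hα, hμ, Matrix.dotProduct_mulVec]
    simp [Matrix.vecMul, dotProduct, hV1]
  have hβ0 : β 0 = μ := by
    rw [hβ, hμ, Matrix.dotProduct_mulVec]
    have : Matrix.vecMul π Q = fun j => (Uᴴ * Q) 0 j := by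
      funext j
      simp only [Matrix.vecMul, dotProduct, Matrix.mul_apply, hU1]
    rw [this]
    simp [Matrix.mulVec, dotProduct]
  -- rewrite each term as a sum over erase 0
  have hterm' : ∀ l : ℕ,
      π ⬝ᵥ (Q * Pt ^ l * Q).mulVec (fun _ => 1) - μ ^ 2
        = ∑ m ∈ Finset.univ.erase (0 : Fin M), α m * lam m ^ l * β m := by
    intro l
    rw [hterm l, ← Finset.sum_erase_add Finset.univ _ (Finset.mem_univ (0 : Fin M))]
    rw [hlam1, one_pow, mul_one, hα0, hβ0]
    ring
  have hfun : (fun l : ℕ => π ⬝ᵥ (Q * Pt ^ l * Q).mulVec (fun _ => 1) - μ ^ 2)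
      = fun l : ℕ => ∑ m ∈ Finset.univ.erase (0 : Fin M), α m * lam m ^ l * β m := by
    funext l; exact hterm' l
  rw [hfun]
  refine hasSum_sum fun m hm => ?_
  have hm0 : m ≠ 0 := Finset.ne_of_mem_erase hm
  have hnorm : ‖lam m‖ < 1 := by
    exact hsub m hm0
  have hgeo := (hasSum_geometric_of_norm_lt_one hnorm).mul_left (α m)
  have := hgeo.mul_right (β m)
  convert this using 1
  have hne : (1 : ℂ) - lam m ≠ 0 := by
    intro h
    have : lam m = 1 := by linear_combination -h
    rw [this] at hnorm; simp at hnorm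
  · rfl
  ring
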